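/- arXiv:2402.05470 — 2 statements merged into one kernel-verified Lean document; each statement's English description precedes it below -/
import Mathlib

section
/- There is no pair of C² functions ψ, θ : ℝ → ℝ with ψ positive, θ positive, ψ(s)·θ(s)^n = 1 for all s (for some integer n ≥ 1), ψ bounded below by a positive constant, and θ''(s) ≥ δ·θ(s) for all s for some δ > 0. -/
lemma aux_growth (θ : ℝ → ℝ) (hθ : ContDiff ℝ 2 θ)
    (hθpos : ∀ s, 0 < θ s)
    (C : ℝ) (hC : ∀ s, θ s ≤ C)
    (δ : ℝ) (hδ : 0 < δ) (hconv : ∀ s, δ * θ s ≤ deriv (deriv θ) s)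
    (h0 : 0 ≤ deriv θ 0) : False := by
  have hθd : Differentiable ℝ θ := hθ.differentiable (by norm_num)
  have hθ' : ContDiff ℝ 1 (deriv θ) := by
    exact (contDiff_succ_iff_deriv.mp (show ContDiff ℝ (1+1) θ by exact_mod_cast hθ)).2.2
  have hθ'd : Differentiable ℝ (deriv θ) := hθ'.differentiable (by norm_num)
  -- deriv θ is strictly monotone
  have hsm : StrictMono (deriv θ) := by
    apply strictMono_of_deriv_pos
    intro s
    exact lt_of_lt_of_le (mul_pos hδ (hθpos s)) (hconv s)
  -- deriv θ s ≥ 0 for s ≥ 0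
  have hd_nonneg : ∀ s, 0 ≤ s → 0 ≤ deriv θ s := by
    intro s hs
    rcases eq_or_lt_of_le hs with h | h
    · simpa [← h] using h0
    · exact le_trans h0 (hsm h).le
  -- θ monotone on Ici 0
  have hmono : MonotoneOn θ (Set.Ici (0:ℝ)) := by
    apply monotoneOn_of_deriv_nonneg (convex_Ici 0) hθd.continuous.continuousOn
      (fun s _ => hθd s |>.differentiableWithinAt)
    intro s hs
    exact hd_nonneg s (le_of_lt (by simpa using hs))
  set k := δ * θ 0 with hk
  have hkpos : 0 < k := mul_pos hδ (hθpos 0)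
  -- deriv θ s ≥ k * s on Ici 0
  have hstep1 : ∀ s, 0 ≤ s → k * s ≤ deriv θ s := by
    intro s hs
    have hm2 : MonotoneOn (fun s => deriv θ s - k * s) (Set.Ici (0:ℝ)) := by
      apply monotoneOn_of_deriv_nonneg (convex_Ici 0)
        ((hθ'd.sub (by fun_prop)).continuous.continuousOn)
        (fun t _ => ((hθ'd t).sub (by fun_prop)).differentiableWithinAt)
      intro t ht
      rw [interior_Ici] at ht
      have hd : deriv (fun s => deriv θ s - k * s) t = deriv (deriv θ) t - k := by
        rw [deriv_fun_sub (hθ'd t) (by fun_prop)]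
        simp [deriv_const_mul_field]
      show 0 ≤ deriv (fun s => deriv θ s - k * s) t
      rw [hd, sub_nonneg]
      calc k = δ * θ 0 := hk
        _ ≤ δ * θ t := by
            apply mul_le_mul_of_nonneg_left _ hδ.le
            exact hmono (le_refl (0:ℝ)) (Set.mem_Ici.mpr (le_of_lt (Set.mem_Ioi.mp ht))) (le_of_lt (Set.mem_Ioi.mp ht))
        _ ≤ deriv (deriv θ) t := hconv t
    have := hm2 (Set.self_mem_Ici) hs hs
    simp at this
    linarith
  -- θ s ≥ θ 0 + k s²/2 on Ici 0
  have hstep2 : ∀ s, 0 ≤ s → θ 0 + k * s ^ 2 / 2 ≤ θ s := by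
    intro s hs
    have hm3 : MonotoneOn (fun s => θ s - k * s ^ 2 / 2) (Set.Ici (0:ℝ)) := by
      apply monotoneOn_of_deriv_nonneg (convex_Ici 0)
        ((hθd.sub (by fun_prop)).continuous.continuousOn)
        (fun t _ => ((hθd t).sub (by fun_prop)).differentiableWithinAt)
      intro t ht
      rw [interior_Ici] at ht
      have hd : deriv (fun s => θ s - k * s ^ 2 / 2) t = deriv θ t - k * t := by
        rw [deriv_fun_sub (hθd t) (by fun_prop)]
        have : deriv (fun s => k * s ^ 2 / 2) t = k * t := by
          rw [show (fun s => k * s ^ 2 / 2) = fun s => (k/2) * s ^ 2 by funext s; ring]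
          rw [deriv_const_mul _ (by fun_prop)]
          simp [deriv_pow]
          ring
        rw [this]
      show 0 ≤ deriv (fun s => θ s - k * s ^ 2 / 2) t
      rw [hd, sub_nonneg]
      exact hstep1 t ht.le
    have := hm3 (Set.self_mem_Ici) hs hs
    simp at this
    linarith
  -- contradiction at s = max 1 (2C/k)
  have hCpos : 0 < C := lt_of_lt_of_le (hθpos 0) (hC 0)
  set s := max 1 (2 * C / k) with hs
  have hs1 : (1:ℝ) ≤ s := le_max_left _ _
  have hs0 : (0:ℝ) ≤ s := by linarith
  have h2 : 2 * C / k ≤ s := le_max_right _ _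
  have hks : 2 * C ≤ k * s := by
    rw [div_le_iff₀ hkpos] at h2; linarith [mul_comm s k]
  have hsq : k * s ≤ k * s ^ 2 := by
    have : s ≤ s ^ 2 := by nlinarith
    nlinarith
  have := hstep2 s hs0
  have := hC s
  have := hθpos 0
  nlinarith

/-- There is no pair of C² functions ψ, θ with ψ ≥ m > 0, θ > 0, ψθⁿ = 1,
and θ'' ≥ δθ for some δ > 0. -/
theorem stmt_1 (n : ℕ) (hn : 1 ≤ n) (ψ θ : ℝ → ℝ)
    (hψ : ContDiff ℝ 2 ψ) (hθ : ContDiff ℝ 2 θ)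
    (m : ℝ) (hm : 0 < m) (hψm : ∀ s, m ≤ ψ s)
    (hθpos : ∀ s, 0 < θ s)
    (hrel : ∀ s, ψ s * θ s ^ n = 1)
    (δ : ℝ) (hδ : 0 < δ) (hconv : ∀ s, δ * θ s ≤ deriv (deriv θ) s) :
    False := by
  -- bound: θ s ≤ max 1 (1/m)
  have hC : ∀ s, θ s ≤ max 1 (1/m) := by
    intro s
    rcases le_or_gt (θ s) 1 with h | h
    · exact le_trans h (le_max_left _ _)
    · have hpow : θ s ^ n ≤ 1 / m := by
        have h1 : ψ s * θ s ^ n = 1 := hrel s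
        have hψs : 0 < ψ s := lt_of_lt_of_le hm (hψm s)
        have : θ s ^ n = 1 / ψ s := by field_simp at h1 ⊢; linarith [h1]
        rw [this]
        exact one_div_le_one_div_of_le hm (hψm s)
      have : θ s ≤ θ s ^ n := le_self_pow₀ h.le (by omega)
      exact le_trans (le_trans this hpow) (le_max_right _ _)
  rcases le_or_gt 0 (deriv θ 0) with h0 | h0
  · exact aux_growth θ hθ hθpos _ hC δ hδ hconv h0
  · -- reflect
    set η := fun s => θ (-s) with hη
    have hηc : ContDiff ℝ 2 η := hθ.comp (contDiff_id.neg)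
    have hd1 : ∀ s, deriv η s = -deriv θ (-s) := by
      intro s
      exact deriv_comp_neg θ s
    have hθd : Differentiable ℝ θ := hθ.differentiable (by norm_num)
    have hθ'd : Differentiable ℝ (deriv θ) :=
      ((contDiff_succ_iff_deriv.mp (show ContDiff ℝ (1+1) θ by exact_mod_cast hθ)).2.2).differentiable (by norm_num)
    have hd2 : ∀ s, deriv (deriv η) s = deriv (deriv θ) (-s) := by
      intro s
      have : deriv η = fun s => -deriv θ (-s) := funext hd1
      rw [this]
      rw [deriv_comp_neg (fun t => -deriv θ t)]
      rw [deriv.fun_neg]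
      ring
    apply aux_growth η hηc (fun s => hθpos (-s)) (max 1 (1/m)) (fun s => hC (-s)) δ hδ
    · intro s
      rw [hd2]
      exact hconv (-s)
    · rw [hd1]
      simp
      linarith
end

section
/- Define x₁(s) = √(2(eˢ + e⁻ˢ − 1)) for s in a neighborhood of 0. Then (x₁(s)·x₁'(s))' = eˢ + e⁻ˢ, and consequently (1 − (x₁(s) x₁'(s))')/x₁(s)² = −1/2 for all s in this neighborhood. -/
open Real

private lemma f_ge (u : ℝ) : 1 ≤ Real.exp u + Real.exp (-u) - 1 := by
  have h : Real.exp u * Real.exp (-u) = 1 := by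
    rw [← Real.exp_add]; simp
  nlinarith [sq_nonneg (Real.exp u - 1), Real.exp_pos (-u), Real.exp_pos u]

private lemma key (x₁ : ℝ → ℝ)
    (hx₁ : ∀ s, x₁ s = Real.sqrt (2 * (Real.exp s + Real.exp (-s) - 1))) :
    ∀ u, x₁ u * deriv x₁ u = Real.exp u - Real.exp (-u) := by
  intro u
  have hfpos : ∀ v : ℝ, 0 < 2 * (Real.exp v + Real.exp (-v) - 1) := by
    intro v; nlinarith [f_ge v]
  have hd : HasDerivAt (fun v => 2 * (Real.exp v + Real.exp (-v) - 1))
      (2 * (Real.exp u - Real.exp (-u))) u := by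
    have h1 : HasDerivAt (fun v : ℝ => Real.exp v) (Real.exp u) u := Real.hasDerivAt_exp u
    have h2 : HasDerivAt (fun v : ℝ => Real.exp (-v)) (-Real.exp (-u)) u := by
      have := (Real.hasDerivAt_exp (-u)).comp u ((hasDerivAt_id u).neg)
      simpa [Function.comp_def] using this
    have := ((h1.add h2).sub_const 1).const_mul 2
    exact this.congr_deriv (by ring)
  have hsq : HasDerivAt x₁
      ((2 * (Real.exp u - Real.exp (-u))) / (2 * Real.sqrt (2 * (Real.exp u + Real.exp (-u) - 1)))) u := by
    have := hd.sqrt (ne_of_gt (hfpos u))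
    have heq : x₁ = fun v => Real.sqrt (2 * (Real.exp v + Real.exp (-v) - 1)) := funext hx₁
    rw [heq]; exact this
  rw [hsq.deriv, hx₁ u]
  have hs : Real.sqrt (2 * (Real.exp u + Real.exp (-u) - 1)) ≠ 0 :=
    ne_of_gt (Real.sqrt_pos.mpr (hfpos u))
  rw [mul_div_assoc', div_eq_iff (by positivity)]
  ring

/-- For x₁(s) = √(2(eˢ + e⁻ˢ − 1)) near 0, (x₁x₁')' = eˢ + e⁻ˢ and
(1 − (x₁x₁')')/x₁² = −1/2. -/
theorem stmt_5 (ε : ℝ) (hε : 0 < ε)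
    (x₁ : ℝ → ℝ) (hx₁ : ∀ s, x₁ s = Real.sqrt (2 * (Real.exp s + Real.exp (-s) - 1))) :
    ∀ s ∈ Set.Ioo (-ε) ε,
      deriv (fun u => x₁ u * deriv x₁ u) s = Real.exp s + Real.exp (-s) ∧
      (1 - deriv (fun u => x₁ u * deriv x₁ u) s) / (x₁ s) ^ 2 = -(1 / 2) := by
  intro s _
  have hfun : (fun u => x₁ u * deriv x₁ u) = fun u => Real.exp u - Real.exp (-u) :=
    funext (key x₁ hx₁)
  have hd : deriv (fun u => x₁ u * deriv x₁ u) s = Real.exp s + Real.exp (-s) := by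
    rw [hfun]
    have h1 : HasDerivAt (fun v : ℝ => Real.exp v) (Real.exp s) s := Real.hasDerivAt_exp s
    have h2 : HasDerivAt (fun v : ℝ => Real.exp (-v)) (-Real.exp (-s)) s := by
      have := (Real.hasDerivAt_exp (-s)).comp s ((hasDerivAt_id s).neg)
      simpa [Function.comp_def] using this
    have := (h1.sub h2).deriv
    erw [this]; ring
  refine ⟨hd, ?_⟩
  rw [hd, hx₁ s, Real.sq_sqrt (by nlinarith [f_ge s] : (0:ℝ) ≤ 2 * (Real.exp s + Real.exp (-s) - 1))]
  have hne : 2 * (Real.exp s + Real.exp (-s) - 1) ≠ 0 := by nlinarith [f_ge s]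
  rw [div_eq_iff hne]
  ring
end
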